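/- Let f_1,...,f_n : ℝ → ℝ be proper, lower semi-continuous, convex functions, and consider the problem of minimizing ∑_i f_i(x_i) subject to ∑_i x_i = C. Let x* be a global minimizer with value p* = ∑_i f_i(x*_i). Suppose iterates (x^{k+1}, y^{k+1}) are generated by the exact DM-ADMM update: y^{k+1} = y^k + ρ r^k and x_i^{k+1} = argmin_x f_i(x) + y^{k+1}(x + r^k - x_i^k) + (ρ/2)(x + r^k - x_i^k)², where r^k = ∑_i x_i^k - C. Then the objective value p^{k+1} = ∑_i f_i(x_i^{k+1}) satisfies p^{k+1} - p* ≤ -y^{k+2} r^{k+1} - ρ(r^k - r^{k+1}) r^{k+1} - ρ ∑_{i=1}^n (x_i^k - x_i^{k+1})(x*_i - x_i^{k+1}). -/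

import Mathlib

/-- Strong-convexity style improvement of the optimality condition for the
ADMM subproblem: if `xh` minimizes `f x + y*(x+c) + (ρ/2)*(x+c)^2` with `f`
convex, then the minimum improves by `(ρ/2)*(x - xh)^2`. -/
lemma dm_admm_strong_min (f : ℝ → ℝ) (hf : ConvexOn ℝ Set.univ f)
    (ρ : ℝ) (hρ : 0 < ρ) (y c xh : ℝ)
    (h : ∀ x, f xh + y * (xh + c) + (ρ / 2) * (xh + c) ^ 2
        ≤ f x + y * (x + c) + (ρ / 2) * (x + c) ^ 2) (x : ℝ) :
    f xh + y * (xh + c) + (ρ / 2) * (xh + c) ^ 2 + (ρ / 2) * (x - xh) ^ 2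
      ≤ f x + y * (x + c) + (ρ / 2) * (x + c) ^ 2 := by
  set Q := (ρ / 2) * (x - xh) ^ 2 with hQdef
  set D := (f x + y * (x + c) + (ρ / 2) * (x + c) ^ 2)
      - (f xh + y * (xh + c) + (ρ / 2) * (xh + c) ^ 2) with hDdef
  have hQ : 0 ≤ Q := by positivity
  have hstep : ∀ t ∈ Set.Ioc (0:ℝ) 1, Q - D ≤ Q * t := by
    intro t ht
    obtain ⟨ht0, ht1⟩ := ht
    have hconv := hf.2 (Set.mem_univ xh) (Set.mem_univ x)
      (show (0:ℝ) ≤ 1 - t by linarith) (le_of_lt ht0) (by ring)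
    simp only [smul_eq_mul] at hconv
    have h2 := h ((1 - t) * xh + t * x)
    have hcomb : f xh + y * (xh + c) + ρ / 2 * (xh + c) ^ 2
        ≤ (1 - t) * f xh + t * f x + y * ((1 - t) * xh + t * x + c)
          + ρ / 2 * ((1 - t) * xh + t * x + c) ^ 2 := by linarith
    have hkey : 0 ≤ t * D - t * (1 - t) * Q := by
      simp only [hQdef, hDdef]
      nlinarith [hcomb]
    nlinarith [hkey, ht0]
  suffices hA : Q - D ≤ 0 by
    simp only [hQdef, hDdef] at hA ⊢
    linarith
  rcases eq_or_lt_of_le hQ with hQ0 | hQpos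
  · have := hstep 1 ⟨one_pos, le_refl 1⟩
    rw [← hQ0] at this
    linarith
  · by_contra hA
    push_neg at hA
    set A := Q - D with hAdef
    have ht0 : (0:ℝ) < min 1 (A / (2 * Q)) :=
      lt_min one_pos (by positivity)
    have h1 := hstep (min 1 (A / (2 * Q))) ⟨ht0, min_le_left _ _⟩
    have h2 : Q * min 1 (A / (2 * Q)) ≤ Q * (A / (2 * Q)) :=
      mul_le_mul_of_nonneg_left (min_le_right _ _) hQ
    have h3 : Q * (A / (2 * Q)) = A / 2 := by
      field_simp
    linarith

/-- Proposition 1: objective bound for one step of exact DM-ADMM. -/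
theorem dm_admm_objective_bound
    (n : ℕ) (f : Fin n → ℝ → ℝ) (C ρ : ℝ) (hρ : 0 < ρ)
    (hconv : ∀ i, ConvexOn ℝ Set.univ (f i))
    (hlsc : ∀ i, LowerSemicontinuous (f i))
    (xstar : Fin n → ℝ) (hfeas : ∑ i, xstar i = C)
    (hmin : ∀ z : Fin n → ℝ, ∑ i, z i = C →
      ∑ i, f i (xstar i) ≤ ∑ i, f i (z i))
    (xk xk1 : Fin n → ℝ) (yk yk1 yk2 : ℝ)
    (rk rk1 : ℝ) (hrk : rk = ∑ i, xk i - C) (hrk1 : rk1 = ∑ i, xk1 i - C)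
    (hyk1 : yk1 = yk + ρ * rk) (hyk2 : yk2 = yk1 + ρ * rk1)
    (hupd : ∀ i, ∀ x : ℝ,
      f i (xk1 i) + yk1 * (xk1 i + rk - xk i) + (ρ / 2) * (xk1 i + rk - xk i) ^ 2
        ≤ f i x + yk1 * (x + rk - xk i) + (ρ / 2) * (x + rk - xk i) ^ 2) :
    (∑ i, f i (xk1 i)) - (∑ i, f i (xstar i))
      ≤ -yk2 * rk1 - ρ * (rk - rk1) * rk1
        - ρ * ∑ i, (xk i - xk1 i) * (xstar i - xk1 i) := by
  -- per-index strengthened inequality at x = xstar i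
  have key : ∀ i, f i (xk1 i) - f i (xstar i)
      ≤ yk1 * (xstar i - xk1 i) + ρ * rk * (xstar i - xk1 i)
        - ρ * ((xk i - xk1 i) * (xstar i - xk1 i)) := by
    intro i
    have h := dm_admm_strong_min (f i) (hconv i) ρ hρ yk1 (rk - xk i) (xk1 i)
      (by intro x; have := hupd i x; linarith [hupd i x]) (xstar i)
    nlinarith [h]
  have hsum := Finset.sum_le_sum (fun i (_ : i ∈ Finset.univ) => key i)
  rw [Finset.sum_sub_distrib] at hsum
  have hsplit : ∑ i, (yk1 * (xstar i - xk1 i) + ρ * rk * (xstar i - xk1 i)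
        - ρ * ((xk i - xk1 i) * (xstar i - xk1 i)))
      = yk1 * (∑ i, (xstar i - xk1 i)) + ρ * rk * (∑ i, (xstar i - xk1 i))
        - ρ * ∑ i, (xk i - xk1 i) * (xstar i - xk1 i) := by
    rw [Finset.sum_sub_distrib, Finset.sum_add_distrib, ← Finset.mul_sum,
      ← Finset.mul_sum, ← Finset.mul_sum]
  have hd : ∑ i, (xstar i - xk1 i) = -rk1 := by
    rw [Finset.sum_sub_distrib, hfeas]
    linarith [hrk1]
  rw [hsplit, hd] at hsum
  have hfin : -yk2 * rk1 - ρ * (rk - rk1) * rk1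
      = yk1 * -rk1 + ρ * rk * -rk1 := by rw [hyk2]; ring
  linarith [hsum]
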